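/- The number of well-increasing sequences u₁, …, u_ℓ in 𝔽₂ⁿ is at most C(n, ≤ 4ℓn/k) · 2^{4ℓ²n/k}, where C(n, ≤ m) = Σ_{j=0}^{m} C(n,j). In particular, for n ≥ k it is at most k^{4ℓn/k} · 2^{4ℓ²n/k}. -/

import Mathlib

open Finset

/-- A sequence u₁,…,u_ℓ of subsets of [n] is well-increasing (with parameter k) if
n/k ≤ |u_i \ (u₁∪⋯∪u_{i−1})| ≤ 4n/k for all i. -/
def WellIncreasing (n k : ℕ) {ℓ : ℕ} (u : Fin ℓ → Finset (Fin n)) : Prop :=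
  ∀ i : Fin ℓ,
    (n : ℝ) / k ≤ ((u i \ (Finset.univ.filter (· < i)).biUnion u).card : ℝ) ∧
    ((u i \ (Finset.univ.filter (· < i)).biUnion u).card : ℝ) ≤ 4 * n / k

lemma wi_union_card (n k ℓ : ℕ) (u : Fin ℓ → Finset (Fin n))
    (hk : 0 < k) (hu : WellIncreasing n k u) :
    ((Finset.univ.biUnion u).card : ℝ) ≤ 4 * ℓ * n / k := by
  have H : ∀ j : ℕ, (((Finset.univ.filter (fun i : Fin ℓ => (i : ℕ) < j)).biUnion u).card : ℝ)
      ≤ 4 * j * n / k := by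
    intro j
    induction j with
    | zero => simp
    | succ j ih =>
      by_cases hj : j < ℓ
      · have hsplit : (Finset.univ.filter (fun i : Fin ℓ => (i : ℕ) < j + 1))
            = insert (⟨j, hj⟩ : Fin ℓ) (Finset.univ.filter (fun i : Fin ℓ => (i : ℕ) < j)) := by
          ext i
          simp [Nat.lt_succ_iff_lt_or_eq, Fin.ext_iff, or_comm]
          omega
        rw [hsplit, Finset.biUnion_insert]
        have hprev : (Finset.univ.filter (· < (⟨j, hj⟩ : Fin ℓ))).biUnion u
            = (Finset.univ.filter (fun i : Fin ℓ => (i : ℕ) < j)).biUnion u := by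
          congr 1
        have hb := (hu ⟨j, hj⟩).2
        rw [hprev] at hb
        set S := (Finset.univ.filter (fun i : Fin ℓ => (i : ℕ) < j)).biUnion u with hS
        have hcard : (u ⟨j, hj⟩ ∪ S).card = (u ⟨j, hj⟩ \ S).card + S.card :=
          (Finset.card_sdiff_add_card _ _).symm
        have hid : 4 * ((j : ℝ) + 1) * n / k = 4 * n / k + 4 * j * n / k := by ring
        have hcR : ((u ⟨j, hj⟩ ∪ S).card : ℝ) = ((u ⟨j, hj⟩ \ S).card : ℝ) + (S.card : ℝ) := by
          exact_mod_cast congrArg (fun x : ℕ => (x : ℝ)) hcard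
        push_cast
        rw [hid, hcR]
        linarith
      · have heq : (Finset.univ.filter (fun i : Fin ℓ => (i : ℕ) < j + 1))
            = (Finset.univ.filter (fun i : Fin ℓ => (i : ℕ) < j)) := by
          ext i
          have := i.isLt
          simp only [Finset.mem_filter, Finset.mem_univ, true_and]
          omega
        rw [heq]
        refine ih.trans ?_
        have hk' : (0:ℝ) < k := by exact_mod_cast hk
        push_cast
        gcongr
        linarith
  have huniv : (Finset.univ.filter (fun i : Fin ℓ => (i : ℕ) < ℓ)) = Finset.univ :=
    Finset.filter_true_of_mem (fun i _ => i.isLt)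
  have := H ℓ
  rwa [huniv] at this

lemma sum_choose_le_exp (n m : ℕ) (h1 : 1 ≤ m) (hmn : m ≤ n) :
    (∑ j ∈ Finset.range (m + 1), (n.choose j : ℝ)) ≤ (Real.exp 1 * n / m) ^ m := by
  have hn0 : (0:ℝ) < n := by
    exact_mod_cast Nat.lt_of_lt_of_le (Nat.lt_of_lt_of_le Nat.zero_lt_one h1) hmn
  have hm0 : (0:ℝ) < m := by exact_mod_cast h1
  set t : ℝ := m / n with ht
  have ht0 : 0 < t := by positivity
  have ht1 : t ≤ 1 := by
    rw [ht, div_le_one hn0]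
    exact_mod_cast hmn
  have hmain : (∑ j ∈ Finset.range (m + 1), (n.choose j : ℝ)) * t ^ m ≤ (t + 1) ^ n := by
    calc (∑ j ∈ Finset.range (m + 1), (n.choose j : ℝ)) * t ^ m
        = ∑ j ∈ Finset.range (m + 1), (n.choose j : ℝ) * t ^ m := by rw [Finset.sum_mul]
      _ ≤ ∑ j ∈ Finset.range (m + 1), (n.choose j : ℝ) * t ^ j := by
          apply Finset.sum_le_sum
          intro j hj
          have hjm : j ≤ m := Nat.lt_succ_iff.1 (Finset.mem_range.1 hj)
          have : t ^ m ≤ t ^ j := pow_le_pow_of_le_one ht0.le ht1 hjm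
          have hc : (0:ℝ) ≤ (n.choose j : ℝ) := by positivity
          nlinarith
      _ ≤ ∑ j ∈ Finset.range (n + 1), (n.choose j : ℝ) * t ^ j := by
          apply Finset.sum_le_sum_of_subset_of_nonneg
          · exact Finset.range_subset_range.2 (by omega)
          · intro j _ _
            positivity
      _ = (t + 1) ^ n := by
          rw [add_pow]
          apply Finset.sum_congr rfl
          intro j hj
          simp [mul_comm]
  have hexp : (t + 1) ^ n ≤ Real.exp 1 ^ m := by
    have h1e : t + 1 ≤ Real.exp t := by linarith [Real.add_one_le_exp t]
    have h2e : (t + 1) ^ n ≤ Real.exp t ^ n := by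
      apply pow_le_pow_left₀ (by linarith) h1e
    refine h2e.trans ?_
    rw [← Real.exp_nat_mul, ← Real.exp_nat_mul]
    have : (n : ℝ) * t = (m : ℝ) * 1 := by
      rw [ht]; field_simp
    rw [this]
  have htm : 0 < t ^ m := by positivity
  have : (∑ j ∈ Finset.range (m + 1), (n.choose j : ℝ)) ≤ Real.exp 1 ^ m / t ^ m := by
    rw [le_div_iff₀ htm]
    exact hmain.trans hexp
  refine this.trans ?_
  rw [← div_pow]
  apply pow_le_pow_left₀ (by positivity)
  rw [ht]
  rw [div_div_eq_mul_div]

lemma card_wi_le (n k ℓ : ℕ) (hk : 0 < k) :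
    Nat.card {u : Fin ℓ → Finset (Fin n) // WellIncreasing n k u} ≤
      (∑ j ∈ Finset.range (⌊(4 * ℓ * n : ℝ) / k⌋₊ + 1), n.choose j) *
        2 ^ (⌊(4 * ℓ * n : ℝ) / k⌋₊ * ℓ) := by
  classical
  set m : ℕ := ⌊(4 * ℓ * n : ℝ) / k⌋₊ with hm
  set T : Finset ((_ : Finset (Fin n)) × (Fin ℓ → Finset (Fin n))) :=
    (Finset.univ.filter (fun U : Finset (Fin n) => U.card ≤ m)).sigma
      (fun U => Fintype.piFinset (fun _ : Fin ℓ => U.powerset)) with hT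
  have hmem : ∀ u : {u : Fin ℓ → Finset (Fin n) // WellIncreasing n k u},
      (⟨Finset.univ.biUnion u.1, u.1⟩ : (_ : Finset (Fin n)) × (Fin ℓ → Finset (Fin n))) ∈ T := by
    intro u
    rw [hT, Finset.mem_sigma]
    constructor
    · simp only [Finset.mem_filter, Finset.mem_univ, true_and]
      exact Nat.le_floor (wi_union_card n k ℓ u.1 hk u.2)
    · rw [Fintype.mem_piFinset]
      intro i
      exact Finset.mem_powerset.2 (Finset.subset_biUnion_of_mem u.1 (Finset.mem_univ i))
  have key : Nat.card {u : Fin ℓ → Finset (Fin n) // WellIncreasing n k u} ≤ T.card := by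
    rw [← Fintype.card_coe T, ← Nat.card_eq_fintype_card]
    apply Nat.card_le_card_of_injective
      (fun u : {u : Fin ℓ → Finset (Fin n) // WellIncreasing n k u} =>
        (⟨⟨Finset.univ.biUnion u.1, u.1⟩, hmem u⟩ : {x // x ∈ T}))
    intro a b h
    apply Subtype.ext
    exact congrArg (fun x : {x // x ∈ T} => x.1.2) h
  refine key.trans ?_
  have hfil : (Finset.univ.filter (fun U : Finset (Fin n) => U.card ≤ m)).card
      ≤ ∑ j ∈ Finset.range (m + 1), n.choose j := by
    have hsub : Finset.univ.filter (fun U : Finset (Fin n) => U.card ≤ m)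
        ⊆ (Finset.range (m + 1)).biUnion
            (fun j => Finset.powersetCard j (Finset.univ : Finset (Fin n))) := by
      intro U hU
      rw [Finset.mem_biUnion]
      exact ⟨U.card, Finset.mem_range.2 (Nat.lt_succ_of_le (Finset.mem_filter.1 hU).2),
        Finset.mem_powersetCard.2 ⟨Finset.subset_univ U, rfl⟩⟩
    calc _ ≤ _ := Finset.card_le_card hsub
      _ ≤ ∑ j ∈ Finset.range (m + 1), (Finset.powersetCard j (Finset.univ : Finset (Fin n))).card :=
          Finset.card_biUnion_le
      _ = ∑ j ∈ Finset.range (m + 1), n.choose j := by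
          simp [Finset.card_powersetCard]
  rw [hT, Finset.card_sigma]
  calc ∑ U ∈ Finset.univ.filter (fun U : Finset (Fin n) => U.card ≤ m),
        (Fintype.piFinset (fun _ : Fin ℓ => U.powerset)).card
      ≤ ∑ U ∈ Finset.univ.filter (fun U : Finset (Fin n) => U.card ≤ m), 2 ^ (m * ℓ) := by
        apply Finset.sum_le_sum
        intro U hU
        rw [Fintype.card_piFinset]
        simp only [Finset.card_powerset, Finset.prod_const, Finset.card_univ, Fintype.card_fin]
        rw [← pow_mul]
        exact Nat.pow_le_pow_right (by norm_num)
          (Nat.mul_le_mul_right _ ((Finset.mem_filter.1 hU).2))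
    _ = (Finset.univ.filter (fun U : Finset (Fin n) => U.card ≤ m)).card * 2 ^ (m * ℓ) := by
        rw [Finset.sum_const, smul_eq_mul]
    _ ≤ (∑ j ∈ Finset.range (m + 1), n.choose j) * 2 ^ (m * ℓ) :=
        Nat.mul_le_mul_right _ hfil

/-- the number of well-increasing sequences is at most
C(n, ≤ 4ℓn/k) · 2^{4ℓ²n/k}; in particular for n ≥ k at most k^{4ℓn/k} · 2^{4ℓ²n/k}. -/
theorem stmt14 (n k ℓ : ℕ) (hk : 0 < k) :
    (Nat.card {u : Fin ℓ → Finset (Fin n) // WellIncreasing n k u} : ℝ) ≤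
        (∑ j ∈ Finset.range (⌊(4 * ℓ * n : ℝ) / k⌋₊ + 1), (n.choose j : ℝ)) *
          (2 : ℝ) ^ ((4 * ℓ ^ 2 * n : ℝ) / k) ∧
      (k ≤ n →
        (Nat.card {u : Fin ℓ → Finset (Fin n) // WellIncreasing n k u} : ℝ) ≤
          (k : ℝ) ^ ((4 * ℓ * n : ℝ) / k) * (2 : ℝ) ^ ((4 * ℓ ^ 2 * n : ℝ) / k)) := by
  classical
  have hk0 : (0:ℝ) < k := by exact_mod_cast hk
  set m : ℕ := ⌊(4 * ℓ * n : ℝ) / k⌋₊ with hm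
  have hm_le : (m : ℝ) ≤ 4 * ℓ * n / k := Nat.floor_le (by positivity)
  have key := card_wi_le n k ℓ hk
  rw [← hm] at key
  have hexp : ((m * ℓ : ℕ) : ℝ) ≤ (4 * ℓ ^ 2 * n : ℝ) / k := by
    push_cast
    calc (m:ℝ) * ℓ ≤ (4 * ℓ * n / k) * ℓ :=
          mul_le_mul_of_nonneg_right hm_le (by positivity)
      _ = 4 * (ℓ:ℝ) ^ 2 * n / k := by ring
  have h2 : ((2:ℝ) ^ (m * ℓ : ℕ)) ≤ (2:ℝ) ^ ((4 * ℓ ^ 2 * n : ℝ) / k) := by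
    rw [← Real.rpow_natCast 2 (m * ℓ)]
    exact Real.rpow_le_rpow_of_exponent_le one_le_two hexp
  have first : (Nat.card {u : Fin ℓ → Finset (Fin n) // WellIncreasing n k u} : ℝ) ≤
      (∑ j ∈ Finset.range (m + 1), (n.choose j : ℝ)) *
        (2 : ℝ) ^ ((4 * ℓ ^ 2 * n : ℝ) / k) := by
    have hcast : (Nat.card {u : Fin ℓ → Finset (Fin n) // WellIncreasing n k u} : ℝ) ≤
        (∑ j ∈ Finset.range (m + 1), (n.choose j : ℝ)) * (2:ℝ) ^ (m * ℓ : ℕ) := by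
      exact_mod_cast key
    refine hcast.trans ?_
    exact mul_le_mul_of_nonneg_left h2 (by positivity)
  refine ⟨first, fun hkn => ?_⟩
  have hk' : 1 ≤ k := hk
  rcases eq_or_lt_of_le hk' with hk1 | hk2
  · -- k = 1
    have hinj : Nat.card {u : Fin ℓ → Finset (Fin n) // WellIncreasing n k u} ≤
        Nat.card (Fin ℓ → Finset (Fin n)) :=
      Nat.card_le_card_of_injective Subtype.val Subtype.val_injective
    have htot : Nat.card (Fin ℓ → Finset (Fin n)) = 2 ^ (n * ℓ) := by
      simp [Nat.card_eq_fintype_card, Fintype.card_fun, Fintype.card_finset, ← pow_mul]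
    have hEn : ((n * ℓ : ℕ) : ℝ) ≤ (4 * ℓ ^ 2 * n : ℝ) / k := by
      rw [← hk1]
      push_cast
      rw [div_one]
      have h1 : ℓ ≤ ℓ ^ 2 := Nat.le_self_pow (by norm_num) ℓ
      have h1R : (ℓ:ℝ) ≤ (ℓ:ℝ) ^ 2 := by exact_mod_cast h1
      nlinarith [Nat.cast_nonneg (α := ℝ) n, Nat.cast_nonneg (α := ℝ) ℓ]
    have h2' : ((2:ℝ) ^ (n * ℓ : ℕ)) ≤ (2:ℝ) ^ ((4 * ℓ ^ 2 * n : ℝ) / k) := by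
      rw [← Real.rpow_natCast 2 (n * ℓ)]
      exact Real.rpow_le_rpow_of_exponent_le one_le_two hEn
    have hfin : (Nat.card {u : Fin ℓ → Finset (Fin n) // WellIncreasing n k u} : ℝ) ≤
        (2:ℝ) ^ ((4 * ℓ ^ 2 * n : ℝ) / k) := by
      refine le_trans ?_ h2'
      exact_mod_cast hinj.trans_eq htot
    have hone : (k:ℝ) ^ ((4 * ℓ * n : ℝ) / k) = 1 := by
      rw [← hk1]
      push_cast
      exact Real.one_rpow _
    rw [hone, one_mul]
    exact hfin
  · -- 2 ≤ k
    have hk2R : (2:ℝ) ≤ k := by exact_mod_cast hk2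
    have hknR : (k:ℝ) ≤ n := by exact_mod_cast hkn
    have hk1R : (1:ℝ) ≤ k := by exact_mod_cast hk'
    have hA : (∑ j ∈ Finset.range (m + 1), (n.choose j : ℝ)) ≤
        (k:ℝ) ^ ((4 * ℓ * n : ℝ) / k) := by
      rcases Nat.eq_zero_or_pos ℓ with hl0 | hl1
      · subst hl0
        have hm0 : m = 0 := by
          rw [hm]
          norm_num
        have he0 : (4 * ((0:ℕ):ℝ) * n) / k = 0 := by
          norm_num
        rw [hm0, he0, Real.rpow_zero]
        simp
      · have hl1R : (1:ℝ) ≤ ℓ := by exact_mod_cast hl1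
        have hnR : (0:ℝ) ≤ n := Nat.cast_nonneg n
        have h1m : 1 ≤ m := by
          apply Nat.le_floor
          rw [Nat.cast_one, le_div_iff₀ hk0]
          nlinarith
        have hfloor_lt : (4 * ℓ * n : ℝ) / k < m + 1 := Nat.lt_floor_add_one _
        have h4 : (4 * (ℓ:ℝ) * n) < k * m + k := by
          rw [div_lt_iff₀ hk0] at hfloor_lt
          nlinarith
        by_cases hmn : m ≤ n
        · refine (sum_choose_le_exp n m h1m hmn).trans ?_
          have hmR : (0:ℝ) < m := by exact_mod_cast h1m
          have hbase : Real.exp 1 * n / m ≤ k := by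
            rw [div_le_iff₀ hmR]
            nlinarith [Real.exp_one_lt_d9,
              mul_nonneg (sub_nonneg.2 hl1R) hnR]
          calc (Real.exp 1 * n / m) ^ m ≤ (k:ℝ) ^ m :=
                pow_le_pow_left₀ (by positivity) hbase m
            _ = (k:ℝ) ^ ((m:ℕ) : ℝ) := (Real.rpow_natCast _ _).symm
            _ ≤ (k:ℝ) ^ ((4 * ℓ * n : ℝ) / k) :=
                Real.rpow_le_rpow_of_exponent_le hk1R hm_le
        · push_neg at hmn
          have hsum_eq : (∑ j ∈ Finset.range (m + 1), (n.choose j : ℝ)) = 2 ^ n := by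
            have hnat : ∑ j ∈ Finset.range (m + 1), n.choose j
                = ∑ j ∈ Finset.range (n + 1), n.choose j := by
              symm
              apply Finset.sum_subset (Finset.range_subset_range.2 (by omega))
              intro j hj hj'
              rw [Finset.mem_range] at hj hj'
              exact Nat.choose_eq_zero_of_lt (by omega)
            rw [← Nat.cast_sum, hnat, Nat.sum_range_choose]
            push_cast
            ring
          rw [hsum_eq]
          have h2k : (2:ℝ) ^ n ≤ (k:ℝ) ^ n := pow_le_pow_left₀ (by norm_num) hk2R n
          refine h2k.trans ?_
          rw [← Real.rpow_natCast (k:ℝ) n]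
          apply Real.rpow_le_rpow_of_exponent_le hk1R
          have : (n:ℝ) ≤ m := by exact_mod_cast hmn.le
          exact this.trans hm_le
    calc (Nat.card {u : Fin ℓ → Finset (Fin n) // WellIncreasing n k u} : ℝ)
        ≤ (∑ j ∈ Finset.range (m + 1), (n.choose j : ℝ)) *
          (2 : ℝ) ^ ((4 * ℓ ^ 2 * n : ℝ) / k) := first
      _ ≤ (k : ℝ) ^ ((4 * ℓ * n : ℝ) / k) * (2 : ℝ) ^ ((4 * ℓ ^ 2 * n : ℝ) / k) :=
          mul_le_mul_of_nonneg_right hA (by positivity)
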